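/- Let p, q be primes with q dividing (p^p-1)/(p-1), and let N = V ⋊ C_q with V = F_p^p and C_q acting via a matrix M of order q. Then the Sylow p-subgroup V is the unique nontrivial proper normal subgroup of N. -/

import Mathlib

lemma lemA {p q : ℕ} (hp : p.Prime) (hq : q.Prime)
    (hdvd : q ∣ ∑ i ∈ Finset.range p, p ^ i) :
    (p : ZMod q) ≠ 0 ∧ ∀ i, 0 < i → i < p → (p : ZMod q) ^ i ≠ 1 := by
  haveI : Fact q.Prime := ⟨hq⟩
  haveI : NeZero q := ⟨hq.ne_zero⟩
  have hsum : (∑ i ∈ Finset.range p, (p : ZMod q) ^ i) = 0 := by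
    have := (ZMod.natCast_eq_zero_iff _ q).mpr hdvd
    push_cast at this
    exact this
  have hqp : q ≠ p := by
    intro h
    haveI : Fact p.Prime := ⟨hp⟩
    subst h
    rw [show ((q : ZMod q)) = 0 from ZMod.natCast_self q] at hsum
    rw [Finset.sum_eq_single 0 (fun i _ hi => zero_pow hi)
      (by simp [Finset.mem_range, hq.pos])] at hsum
    simp at hsum
  have hx : (p : ZMod q) ≠ 0 := by
    rw [Ne, ZMod.natCast_eq_zero_iff]
    intro h
    exact hqp ((Nat.prime_dvd_prime_iff_eq hq hp).mp h)
  refine ⟨hx, fun i hi0 hip h1 => ?_⟩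
  have hxp : (p : ZMod q) ^ p = 1 := by
    have := geom_sum_mul (p : ZMod q) p
    rw [hsum, zero_mul] at this
    exact sub_eq_zero.mp this.symm
  have hdi : orderOf ((p : ZMod q)) ∣ i := orderOf_dvd_of_pow_eq_one h1
  have hdp : orderOf ((p : ZMod q)) ∣ p := orderOf_dvd_of_pow_eq_one hxp
  have hcop : Nat.Coprime p i := by
    rw [hp.coprime_iff_not_dvd]
    exact fun h => absurd (Nat.le_of_dvd hi0 h) (not_le.mpr hip)
  have h1' : orderOf ((p : ZMod q)) = 1 :=
    Nat.eq_one_of_dvd_coprimes hcop hdp hdi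
  have hx1 : (p : ZMod q) = 1 := orderOf_eq_one_iff.mp h1'
  rw [hx1] at hsum
  simp only [one_pow, Finset.sum_const, Finset.card_range, nsmul_eq_mul, mul_one] at hsum
  rw [hx1] at hsum
  exact one_ne_zero hsum


lemma lemB {p q : ℕ} (hp : p.Prime) (hq : q.Prime)
    (hx : (p : ZMod q) ≠ 0) (hord : ∀ i, 0 < i → i < p → (p : ZMod q) ^ i ≠ 1)
    {d : ℕ} (hd : d < p) : ¬ q ∣ Nat.card (GL (Fin d) (ZMod p)) := by
  haveI : Fact p.Prime := ⟨hp⟩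
  haveI : Fact q.Prime := ⟨hq⟩
  intro hdvd
  rw [Matrix.card_GL_field] at hdvd
  rw [ZMod.card] at hdvd
  obtain ⟨i, -, hi⟩ := (hq.prime.dvd_finset_prod_iff _).mp hdvd
  have hle : p ^ (i : ℕ) ≤ p ^ d := Nat.pow_le_pow_right hp.pos (le_of_lt i.2)
  have : ((p ^ d - p ^ (i : ℕ) : ℕ) : ZMod q) = 0 :=
    (ZMod.natCast_eq_zero_iff _ q).mpr hi
  rw [Nat.cast_sub hle] at this
  push_cast at this
  have hde : (p : ZMod q) ^ d = (p : ZMod q) ^ (i : ℕ) := sub_eq_zero.mp this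
  have h1 : (p : ZMod q) ^ (d - (i:ℕ)) = 1 := by
    have hne : (p : ZMod q) ^ (i:ℕ) ≠ 0 := pow_ne_zero _ hx
    apply mul_right_cancel₀ hne
    rw [← pow_add, Nat.sub_add_cancel (le_of_lt i.2), one_mul, hde]
  exact hord (d - i) (Nat.sub_pos_of_lt i.2) (lt_of_le_of_lt (Nat.sub_le _ _) hd) h1


lemma lemC {p q : ℕ} [Fact p.Prime] (hq : q.Prime) {U : Type} [AddCommGroup U]
    [Module (ZMod p) U] [Module.Finite (ZMod p) U]
    (hnd : ¬ q ∣ Nat.card (GL (Fin (Module.finrank (ZMod p) U)) (ZMod p)))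
    (f : Module.End (ZMod p) U) (hf : f ^ q = 1) : f = 1 := by
  have hu : IsUnit f := IsUnit.of_pow_eq_one hf hq.ne_zero
  set u := hu.unit with hu_def
  have huq : u ^ q = 1 :=
    Units.ext (by rw [Units.val_pow_eq_pow_val, hu.unit_spec, hf, Units.val_one])
  have hdvd : orderOf u ∣ q := orderOf_dvd_of_pow_eq_one huq
  rcases (Nat.dvd_prime hq).mp hdvd with h1 | hqq
  · have : u = 1 := orderOf_eq_one_iff.mp h1
    calc f = (u : Module.End (ZMod p) U) := hu.unit_spec.symm
    _ = 1 := by rw [this]; rfl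
  · exfalso
    apply hnd
    rw [← hqq]
    have hcard : Nat.card (Module.End (ZMod p) U)ˣ
        = Nat.card (GL (Fin (Module.finrank (ZMod p) U)) (ZMod p)) := by
      apply Nat.card_congr
      let b := Module.finBasis (ZMod p) U
      exact (Units.mapEquiv (LinearMap.toMatrixAlgEquiv b).toRingEquiv.toMulEquiv).toEquiv
    rw [← hcard]
    exact orderOf_dvd_natCard u

lemma lemD {p q : ℕ} [Fact p.Prime] (hq : q.Prime) (hqp : q ≠ p)
    (hnd : ∀ d, d < p → ¬ q ∣ Nat.card (GL (Fin d) (ZMod p)))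
    (E : Module.End (ZMod p) (Fin p → ZMod p)) (hE : E ^ q = 1) (hE1 : E ≠ 1)
    (W : Submodule (ZMod p) (Fin p → ZMod p)) (hWi : ∀ v ∈ W, E v ∈ W) :
    W = ⊥ ∨ W = ⊤ := by
  have hp : p.Prime := Fact.out
  by_contra hcon
  push_neg at hcon
  obtain ⟨hWb, hWt⟩ := hcon
  have hrank : Module.finrank (ZMod p) (Fin p → ZMod p) = p := by
    simp [Module.finrank_fintype_fun_eq_card]
  -- restriction to W
  have hrW : Module.finrank (ZMod p) W < p :=
    lt_of_lt_of_eq (Submodule.finrank_lt hWt) hrank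
  have hpow : ∀ (n : ℕ) (x : W), ((LinearMap.restrict E hWi ^ n) x : Fin p → ZMod p)
      = (E ^ n) (x : Fin p → ZMod p) := by
    intro n
    induction n with
    | zero => intro x; simp
    | succ n ih =>
      intro x
      rw [pow_succ, pow_succ, Module.End.mul_apply, Module.End.mul_apply,
        ih (LinearMap.restrict E hWi x)]
      rfl
  have hres1 : LinearMap.restrict E hWi ^ q = 1 := by
    apply LinearMap.ext
    intro x
    apply Subtype.ext
    rw [hpow q x, hE]
    rfl
  have hfix : ∀ v ∈ W, E v = v := by
    have := lemC hq (hnd _ hrW) (LinearMap.restrict E hWi) hres1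
    intro v hv
    have := congrArg Subtype.val (LinearMap.congr_fun this ⟨v, hv⟩)
    simpa [LinearMap.restrict_apply] using this
  -- quotient
  have hle : W ≤ W.comap E := fun v hv => hWi v hv
  set f₂ := Submodule.mapQ W W E hle with hf₂
  have hpow2 : ∀ (n : ℕ) (v : Fin p → ZMod p),
      (f₂ ^ n) (W.mkQ v) = W.mkQ ((E ^ n) v) := by
    intro n
    induction n with
    | zero => intro v; simp
    | succ n ih =>
      intro v
      rw [pow_succ, pow_succ, Module.End.mul_apply, Module.End.mul_apply]
      have hstep : f₂ (W.mkQ v) = W.mkQ (E v) := by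
        rw [Submodule.mkQ_apply, Submodule.mkQ_apply, hf₂, Submodule.mapQ_apply]
      rw [hstep, ih]
  have hq2 : f₂ ^ q = 1 := by
    apply LinearMap.ext
    intro x
    obtain ⟨v, rfl⟩ := Submodule.mkQ_surjective W x
    rw [hpow2 q v, hE]
    rfl
  have hrQ : Module.finrank (ZMod p) ((Fin p → ZMod p) ⧸ W) < p := by
    have hadd := Submodule.finrank_quotient_add_finrank W
    rw [hrank] at hadd
    have hWpos : 0 < Module.finrank (ZMod p) W := by
      rcases Nat.eq_zero_or_pos (Module.finrank (ZMod p) W) with h | h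
      · exact absurd (Submodule.finrank_eq_zero.mp h) hWb
      · exact h
    omega
  have hquot1 : ∀ v : Fin p → ZMod p, E v - v ∈ W := by
    have := lemC hq (hnd _ hrQ) f₂ hq2
    intro v
    have h : W.mkQ (E v) = W.mkQ v := by
      have h0 := LinearMap.congr_fun this (W.mkQ v)
      rw [Module.End.one_apply] at h0
      rw [← h0, hf₂, Submodule.mkQ_apply, Submodule.mkQ_apply, Submodule.mapQ_apply]
    rw [Submodule.mkQ_apply, Submodule.mkQ_apply] at h
    exact (Submodule.Quotient.eq W).mp h
  -- nilpotent part
  have hN2 : (E - 1) * (E - 1) = 0 := by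
    apply LinearMap.ext
    intro v
    have h1 : E v - v ∈ W := hquot1 v
    have h2 : E (E v - v) = E v - v := hfix _ h1
    simp only [Module.End.mul_apply, LinearMap.sub_apply, Module.End.one_apply,
      LinearMap.zero_apply, h2, sub_self]
  have hNn : ∀ m, 2 ≤ m → (E - 1) ^ m = 0 := by
    intro m hm
    have h : (E - 1) ^ m = (E - 1) ^ 2 * (E - 1) ^ (m - 2) := by
      rw [← pow_add]
      congr 1
      omega
    rw [h, pow_two, hN2, zero_mul]
  have hcast : ((p : ℕ) : Module.End (ZMod p) (Fin p → ZMod p)) = 0 := by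
    rw [← map_natCast (algebraMap (ZMod p) (Module.End (ZMod p) (Fin p → ZMod p))) p,
      ZMod.natCast_self, map_zero]
  have hEp : E ^ p = 1 := by
    have hE' : (E - 1) + 1 = E := sub_add_cancel E 1
    rw [← hE', (Commute.one_right (E - 1)).add_pow]
    have hsub : Finset.range 2 ⊆ Finset.range (p + 1) :=
      Finset.range_subset_range.mpr (by have := hp.two_le; omega)
    rw [← Finset.sum_subset hsub (by
      intro m hm hm2
      have h2m : 2 ≤ m := by
        simp only [Finset.mem_range] at hm2
        omega
      rw [hNn m h2m, zero_mul, zero_mul])]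
    rw [Finset.sum_range_succ, Finset.sum_range_one]
    simp only [pow_zero, one_pow, Nat.choose_zero_right, Nat.cast_one, mul_one, one_mul, pow_one,
      Nat.choose_one_right, hcast, mul_zero, add_zero]
  have hd1 : orderOf E ∣ p := orderOf_dvd_of_pow_eq_one hEp
  have hd2 : orderOf E ∣ q := orderOf_dvd_of_pow_eq_one hE
  have hord1 : orderOf E = 1 :=
    Nat.eq_one_of_dvd_coprimes ((Nat.coprime_primes hp hq).mpr (fun h => hqp h.symm)) hd1 hd2
  exact hE1 (orderOf_eq_one_iff.mp hord1)


open SemidirectProduct Multiplicative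

theorem stmt_16 (p q : ℕ) (hp : p.Prime) (hq : q.Prime)
    (hdvd : q ∣ ∑ i ∈ Finset.range p, p ^ i)
    (M : GL (Fin p) (ZMod p)) (hM : orderOf M = q)
    (φ : Multiplicative (ZMod q) →* MulAut (Multiplicative (Fin p → ZMod p)))
    (hφ : ∀ v : Fin p → ZMod p,
      φ (Multiplicative.ofAdd (1 : ZMod q)) (Multiplicative.ofAdd v) =
        Multiplicative.ofAdd ((M : Matrix (Fin p) (Fin p) (ZMod p)).mulVec v)) :
    ((SemidirectProduct.inl :
        Multiplicative (Fin p → ZMod p) →*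
          SemidirectProduct (Multiplicative (Fin p → ZMod p)) (Multiplicative (ZMod q)) φ).range).Normal ∧
      ∀ H : Subgroup
          (SemidirectProduct (Multiplicative (Fin p → ZMod p)) (Multiplicative (ZMod q)) φ),
        H.Normal → H ≠ ⊥ → H ≠ ⊤ →
          H = (SemidirectProduct.inl :
            Multiplicative (Fin p → ZMod p) →* _).range := by
  haveI : Fact p.Prime := ⟨hp⟩
  haveI : Fact q.Prime := ⟨hq⟩
  haveI : NeZero q := ⟨hq.ne_zero⟩
  haveI : NeZero p := ⟨hp.ne_zero⟩
  constructor
  · rw [SemidirectProduct.range_inl_eq_ker_rightHom]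
    infer_instance
  intro H hH hbot htop
  -- the matrix power action
  have hMq : (M : Matrix (Fin p) (Fin p) (ZMod p)) ^ q = 1 := by
    have := pow_orderOf_eq_one M
    rw [hM] at this
    calc (M : Matrix (Fin p) (Fin p) (ZMod p)) ^ q = ((M ^ q : GL (Fin p) (ZMod p)) : Matrix (Fin p) (Fin p) (ZMod p)) := by
          rw [Units.val_pow_eq_pow_val]
    _ = 1 := by rw [this, Units.val_one]
  have hM1 : (M : Matrix (Fin p) (Fin p) (ZMod p)) ≠ 1 := by
    intro h
    have : M = 1 := Units.ext (by rw [h, Units.val_one])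
    rw [this, orderOf_one] at hM
    exact hq.one_lt.ne' hM.symm
  -- the endomorphism
  set E : Module.End (ZMod p) (Fin p → ZMod p) :=
    Matrix.toLinAlgEquiv' (M : Matrix (Fin p) (Fin p) (ZMod p)) with hEdef
  have hEq : E ^ q = 1 := by
    rw [hEdef, ← map_pow, hMq, map_one]
  have hE1 : E ≠ 1 := by
    intro h
    apply hM1
    have : Matrix.toLinAlgEquiv' (M : Matrix (Fin p) (Fin p) (ZMod p))
        = Matrix.toLinAlgEquiv' (1 : Matrix (Fin p) (Fin p) (ZMod p)) := by
      rw [← hEdef, h, map_one]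
    exact Matrix.toLinAlgEquiv'.injective this
  -- the invariant submodule
  set W : Submodule (ZMod p) (Fin p → ZMod p) :=
    { carrier := {v | SemidirectProduct.inl (Multiplicative.ofAdd v) ∈ H}
      add_mem' := by
        intro a b ha hb
        simp only [Set.mem_setOf_eq, ofAdd_add, map_mul] at *
        exact H.mul_mem ha hb
      zero_mem' := by
        simp only [Set.mem_setOf_eq, ofAdd_zero, map_one]
        exact H.one_mem
      smul_mem' := by
        intro c v hv
        simp only [Set.mem_setOf_eq] at *
        obtain ⟨n, rfl⟩ := ZMod.natCast_zmod_surjective c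
        rw [Nat.cast_smul_eq_nsmul, ofAdd_nsmul, map_pow]
        exact H.pow_mem hv n } with hWdef
  have hWmem : ∀ v : Fin p → ZMod p,
      v ∈ W ↔ SemidirectProduct.inl (Multiplicative.ofAdd v) ∈ H := fun v => Iff.rfl
  have hWinv : ∀ v ∈ W, E v ∈ W := by
    intro v hv
    rw [hWmem]
    have hEv : E v = (M : Matrix (Fin p) (Fin p) (ZMod p)).mulVec v := by
      rw [hEdef, Matrix.toLinAlgEquiv'_apply]
    rw [hEv, ← hφ v, SemidirectProduct.inl_aut]
    have := hH.conj_mem _ ((hWmem v).mp hv) (SemidirectProduct.inr (Multiplicative.ofAdd (1 : ZMod q)))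
    rwa [← map_inv] at this
  obtain ⟨hx, hord⟩ := lemA hp hq hdvd
  have hqp : q ≠ p := fun hqp' => hx (by subst hqp'; exact ZMod.natCast_self q)
  have hcases : W = ⊥ ∨ W = ⊤ :=
    lemD hq hqp (fun d hd => lemB hp hq hx hord hd) E hEq hE1 W hWinv
  rcases hcases with hWb | hWt
  · -- W = ⊥ : impossible
    exfalso
    obtain ⟨⟨h, hhH⟩, hne1⟩ := Subgroup.ne_bot_iff_exists_ne_one.mp hbot
    have hne1' : h ≠ 1 := fun h1 => hne1 (Subtype.ext h1)
    have ht : h.right ≠ 1 := by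
      intro h1
      apply hne1'
      have hl : h = SemidirectProduct.inl h.left := by
        conv_lhs => rw [← SemidirectProduct.inl_left_mul_inr_right h]
        rw [h1, map_one, mul_one]
      have hmem : Multiplicative.toAdd h.left ∈ W := by
        rw [hWmem, ofAdd_toAdd, ← hl]
        exact hhH
      rw [hWb, Submodule.mem_bot] at hmem
      have : h.left = 1 := by
        rw [← ofAdd_toAdd h.left, hmem, ofAdd_zero]
      rw [hl, this, map_one]
    set s := Multiplicative.toAdd h.right with hsdef
    have hs : s ≠ 0 := by
      intro h0
      exact ht (by rw [← ofAdd_toAdd h.right, ← hsdef, h0, ofAdd_zero])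
    have hk0 : s.val ≠ 0 := fun h0 => hs ((ZMod.val_eq_zero s).mp h0)
    have hkq : s.val < q := ZMod.val_lt s
    have hMk : (M : Matrix (Fin p) (Fin p) (ZMod p)) ^ s.val ≠ 1 := by
      intro hA
      have : M ^ s.val = 1 := Units.ext (by rw [Units.val_pow_eq_pow_val, hA, Units.val_one])
      exact pow_ne_one_of_lt_orderOf hk0 (by rw [hM]; exact hkq) this
    obtain ⟨w, hw⟩ : ∃ w, ((M : Matrix (Fin p) (Fin p) (ZMod p)) ^ s.val).mulVec w ≠ w := by
      by_contra hall
      push_neg at hall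
      apply hMk
      apply Matrix.toLinAlgEquiv'.injective
      apply LinearMap.ext
      intro w
      rw [Matrix.toLinAlgEquiv'_apply, Matrix.toLinAlgEquiv'_apply, hall w, Matrix.one_mulVec]
    -- φ h.right acts as M ^ s.val
    have hpowact : ∀ (m : ℕ) (v : Fin p → ZMod p),
        ((φ (Multiplicative.ofAdd (1 : ZMod q))) ^ m) (Multiplicative.ofAdd v)
          = Multiplicative.ofAdd (((M : Matrix (Fin p) (Fin p) (ZMod p)) ^ m).mulVec v) := by
      intro m
      induction m with
      | zero => intro v; simp [Matrix.one_mulVec]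
      | succ m ih =>
        intro v
        rw [pow_succ, MulAut.mul_apply, hφ v, ih, Matrix.mulVec_mulVec, ← pow_succ]
    have hrt : h.right = (Multiplicative.ofAdd (1 : ZMod q)) ^ s.val := by
      rw [← ofAdd_nsmul, nsmul_eq_mul, mul_one, ZMod.natCast_val, ZMod.cast_id, hsdef,
        ofAdd_toAdd]
    have hφt : ∀ v : Fin p → ZMod p,
        φ h.right (Multiplicative.ofAdd v)
          = Multiplicative.ofAdd (((M : Matrix (Fin p) (Fin p) (ZMod p)) ^ s.val).mulVec v) := by
      intro v
      rw [hrt, map_pow]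
      exact hpowact s.val v
    -- conjugation computation
    set n : Multiplicative (Fin p → ZMod p) := Multiplicative.ofAdd w with hndef
    have hconj : SemidirectProduct.inl n * h * (SemidirectProduct.inl n)⁻¹ * h⁻¹
        = SemidirectProduct.inl (n * (φ h.right n)⁻¹) := by
      ext
      · simp only [SemidirectProduct.mul_left, SemidirectProduct.mul_right,
          SemidirectProduct.inv_left, SemidirectProduct.inv_right,
          SemidirectProduct.left_inl, SemidirectProduct.right_inl, map_one, map_inv, map_mul,
          MulAut.one_apply, one_mul, mul_one, inv_one, MulAut.apply_inv_self]
        rw [mul_right_comm n h.left ((φ h.right) n)⁻¹, mul_inv_cancel_right]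
      · simp [SemidirectProduct.mul_right, SemidirectProduct.inv_right]
    have hxmem : SemidirectProduct.inl n * h * (SemidirectProduct.inl n)⁻¹ * h⁻¹ ∈ H :=
      H.mul_mem (hH.conj_mem h hhH (SemidirectProduct.inl n)) (H.inv_mem hhH)
    rw [hconj] at hxmem
    have hmemW : w - ((M : Matrix (Fin p) (Fin p) (ZMod p)) ^ s.val).mulVec w ∈ W := by
      rw [hWmem, ofAdd_sub, div_eq_mul_inv, ← hφt w]
      exact hxmem
    rw [hWb, Submodule.mem_bot, sub_eq_zero] at hmemW
    exact hw hmemW.symm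
  · -- W = ⊤ : H = range inl
    have hrange : (SemidirectProduct.inl :
        Multiplicative (Fin p → ZMod p) →* _).range ≤ H := by
      rintro x ⟨y, rfl⟩
      have : Multiplicative.toAdd y ∈ W := by rw [hWt]; trivial
      rw [hWmem, ofAdd_toAdd] at this
      exact this
    apply le_antisymm _ hrange
    intro h hhH
    by_contra hhr
    apply htop
    have ht : h.right ≠ 1 := by
      intro h1
      apply hhr
      refine ⟨h.left, ?_⟩
      conv_rhs => rw [← SemidirectProduct.inl_left_mul_inr_right h]
      rw [h1, map_one, mul_one]
    have hinr : SemidirectProduct.inr h.right ∈ H := by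
      have hh : (SemidirectProduct.inl h.left)⁻¹ * h ∈ H :=
        H.mul_mem (H.inv_mem (hrange ⟨h.left, rfl⟩)) hhH
      have key : (SemidirectProduct.inl h.left)⁻¹ * h = SemidirectProduct.inr h.right := by
        rw [inv_mul_eq_iff_eq_mul]
        exact (SemidirectProduct.inl_left_mul_inr_right h).symm
      rwa [key] at hh
    set s := Multiplicative.toAdd h.right with hsdef
    have hs : s ≠ 0 := by
      intro h0
      exact ht (by rw [← ofAdd_toAdd h.right, ← hsdef, h0, ofAdd_zero])
    have hinr_all : ∀ x : Multiplicative (ZMod q), SemidirectProduct.inr x ∈ H := by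
      intro x
      have hx : h.right ^ (Multiplicative.toAdd x * s⁻¹).val = x := by
        rw [← ofAdd_toAdd h.right, ← hsdef, ← ofAdd_nsmul, nsmul_eq_mul,
          ZMod.natCast_val, ZMod.cast_id, mul_assoc, inv_mul_cancel₀ hs, mul_one, ofAdd_toAdd]
      rw [← hx, map_pow]
      exact H.pow_mem hinr _
    rw [eq_top_iff]
    intro g _
    rw [← SemidirectProduct.inl_left_mul_inr_right g]
    exact H.mul_mem (hrange ⟨g.left, rfl⟩) (hinr_all g.right)
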